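/- Let (X,T) and (Y,S) be minimal systems, λ an S-invariant Borel probability measure on Y, and N a closed T×S-invariant subset of X×Y. For x ∈ X write N[x] = {y ∈ Y : (x,y) ∈ N}. Then λ(N[x]) = λ(N[x']) for all x, x' ∈ X. -/

import Mathlib

open Filter Topology Set

/-- A map between topological spaces is *semiopen* if the image of every
nonempty open set has nonempty interior. -/
def SemiOpen {X Y : Type*} [TopologicalSpace X] [TopologicalSpace Y] (f : X → Y) : Prop :=
  ∀ U : Set X, IsOpen U → U.Nonempty → (interior (f '' U)).Nonempty

/-- The `n`-th iterate (`n : ℤ`) of a homeomorphism. -/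
def zIter {X : Type*} [TopologicalSpace X] (T : X ≃ₜ X) (n : ℤ) : X → X :=
  fun x => (T.toEquiv ^ n) x

/-- The two-sided orbit of a point under a homeomorphism. -/
def zOrbit {X : Type*} [TopologicalSpace X] (T : X ≃ₜ X) (x : X) : Set X :=
  Set.range fun n : ℤ => zIter T n x

/-- A system is minimal if every orbit is dense. -/
def IsMinimalSystem {X : Type*} [TopologicalSpace X] (T : X ≃ₜ X) : Prop :=
  ∀ x : X, Dense (zOrbit T x)

/-- A minimal subset: nonempty, closed, invariant, with no proper nonempty
closed invariant subset. -/
def IsMinimalSubset {X : Type*} [TopologicalSpace X] (T : X ≃ₜ X) (M : Set X) : Prop :=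
  M.Nonempty ∧ IsClosed M ∧ T '' M = M ∧
    ∀ M' ⊆ M, M'.Nonempty → IsClosed M' → T '' M' = M' → M' = M

/-- A factor map between systems. -/
def IsFactorMap {X Y : Type*} [TopologicalSpace X] [TopologicalSpace Y]
    (T : X ≃ₜ X) (S : Y ≃ₜ Y) (f : X → Y) : Prop :=
  Continuous f ∧ Function.Surjective f ∧ ∀ x, f (T x) = S (f x)

/-- The regionally proximal relation. -/
def RP {X : Type*} [MetricSpace X] (T : X ≃ₜ X) : Set (X × X) :=
  {p | ∃ (u v : ℕ → X) (n : ℕ → ℤ),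
    Tendsto u atTop (𝓝 p.1) ∧ Tendsto v atTop (𝓝 p.2) ∧
    Tendsto (fun i => dist (zIter T (n i) (u i)) (zIter T (n i) (v i))) atTop (𝓝 0)}

/-- A joining of two systems: a closed invariant subset of the product with
full projections onto both coordinates. -/
def IsJoining {X Y : Type*} [TopologicalSpace X] [TopologicalSpace Y]
    (T : X ≃ₜ X) (S : Y ≃ₜ Y) (J : Set (X × Y)) : Prop :=
  IsClosed J ∧ (T.prodCongr S) '' J = J ∧
    Prod.fst '' J = Set.univ ∧ Prod.snd '' J = Set.univ

/-- `J` projects onto `X_eq × Y_eq`: phrased via the regionally proximal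
relation, every product of RP-cells meets `J`. -/
def FullEqProjection {X Y : Type*} [MetricSpace X] [MetricSpace Y]
    (T : X ≃ₜ X) (S : Y ≃ₜ Y) (J : Set (X × Y)) : Prop :=
  ∀ x : X, ∀ y : Y, ∃ p ∈ J, (x, p.1) ∈ RP T ∧ (y, p.2) ∈ RP S

/-- Two minimal systems are quasi-disjoint if the full product is the only
joining projecting onto the product of the maximal equicontinuous factors. -/
def QuasiDisjoint {X Y : Type*} [MetricSpace X] [MetricSpace Y]
    (T : X ≃ₜ X) (S : Y ≃ₜ Y) : Prop :=
  ∀ J : Set (X × Y), IsJoining T S J → FullEqProjection T S J → J = Set.univ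

/-- Two systems are disjoint if the full product is the only joining. -/
def DisjointSystems {X Y : Type*} [TopologicalSpace X] [TopologicalSpace Y]
    (T : X ≃ₜ X) (S : Y ≃ₜ Y) : Prop :=
  ∀ J : Set (X × Y), IsJoining T S J → J = Set.univ

/-- A system is equicontinuous (with respect to all integer iterates). -/
def EquicontinuousSystem {X : Type*} [MetricSpace X] (T : X ≃ₜ X) : Prop :=
  ∀ ε > (0 : ℝ), ∃ δ > (0 : ℝ), ∀ x₁ x₂ : X, dist x₁ x₂ < δ →
    ∀ n : ℤ, dist (zIter T n x₁) (zIter T n x₂) < ε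

/-- A pair of points is proximal. -/
def ProximalPair {X : Type*} [MetricSpace X] (T : X ≃ₜ X) (x₁ x₂ : X) : Prop :=
  ∀ ε > (0 : ℝ), ∃ n : ℤ, dist (zIter T n x₁) (zIter T n x₂) < ε

open MeasureTheory in
lemma stmt14_aux_le {X Y : Type*} [MetricSpace X] [CompactSpace X]
    [MetricSpace Y] [CompactSpace Y] [MeasurableSpace Y] [BorelSpace Y]
    (T : X ≃ₜ X) (S : Y ≃ₜ Y)
    (hX : IsMinimalSystem T)
    (lam : Measure Y) [IsProbabilityMeasure lam]
    (hinv : ∀ A : Set Y, MeasurableSet A → lam (S ⁻¹' A) = lam A)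
    (N : Set (X × Y)) (hNclosed : IsClosed N) (hNinv : (T.prodCongr S) '' N = N)
    (x x' : X) : lam {y : Y | (x', y) ∈ N} ≤ lam {y : Y | (x, y) ∈ N} := by
  -- sections are closed
  have hsec : ∀ z : X, IsClosed {y : Y | (z, y) ∈ N} := by
    intro z
    exact hNclosed.preimage (Continuous.prodMk_right z)
  -- key equivalence
  have key : ∀ (z : X) (y : Y), (T z, S y) ∈ N ↔ (z, y) ∈ N := by
    intro z y
    constructor
    · intro h
      rw [← hNinv] at h
      obtain ⟨p, hp, he⟩ := h
      have h1 : T p.1 = T z := congrArg Prod.fst he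
      have h2 : S p.2 = S y := congrArg Prod.snd he
      have : p = (z, y) := Prod.ext (T.injective h1) (S.injective h2)
      rwa [this] at hp
    · intro h
      rw [← hNinv]
      exact ⟨(z, y), h, rfl⟩
  -- measure invariance under S.symm
  have hinv' : ∀ A : Set Y, MeasurableSet A → lam (S.symm ⁻¹' A) = lam A := by
    intro A hA
    have := hinv (S.symm ⁻¹' A) (hA.preimage S.symm.measurable)
    have heq : S ⁻¹' (S.symm ⁻¹' A) = A := by
      ext y; simp
    rw [heq] at this
    exact this.symm
  -- one-step invariance of the section measure
  have fT : ∀ z : X, lam {y : Y | (T z, y) ∈ N} = lam {y : Y | (z, y) ∈ N} := by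
    intro z
    have hset : {y : Y | (T z, y) ∈ N} = S.symm ⁻¹' {y : Y | (z, y) ∈ N} := by
      ext y
      have := key z (S.symm y)
      simp only [Set.mem_setOf_eq, Set.mem_preimage]
      rw [← this, S.apply_symm_apply]
    rw [hset, hinv' _ (hsec z).measurableSet]
  have fT' : ∀ z : X, lam {y : Y | (T.symm z, y) ∈ N} = lam {y : Y | (z, y) ∈ N} := by
    intro z
    have hset : {y : Y | (T.symm z, y) ∈ N} = S ⁻¹' {y : Y | (z, y) ∈ N} := by
      ext y
      have := key (T.symm z) y
      simp only [Set.mem_setOf_eq, Set.mem_preimage]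
      rw [← this, T.apply_symm_apply]
    rw [hset, hinv _ (hsec z).measurableSet]
  -- orbit points have the same section measure
  have horb : ∀ n : ℤ, lam {y : Y | (zIter T n x', y) ∈ N} = lam {y : Y | (x', y) ∈ N} := by
    intro n
    induction n using Int.induction_on with
    | zero => simp [zIter]
    | succ n ih =>
        have hstep : zIter T (n + 1) x' = T (zIter T n x') := by
          show (T.toEquiv ^ ((n : ℤ) + 1)) x' = T ((T.toEquiv ^ (n : ℤ)) x')
          rw [add_comm, zpow_add, zpow_one]
          rfl
        rw [hstep, fT, ih]
    | pred n ih =>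
        have hstep : zIter T (-n - 1) x' = T.symm (zIter T (-n) x') := by
          show (T.toEquiv ^ (-(n : ℤ) - 1)) x' = T.symm ((T.toEquiv ^ (-(n : ℤ))) x')
          have : (-(n : ℤ) - 1) = (-1) + (-(n : ℤ)) := by ring
          rw [this, zpow_add, zpow_neg_one]
          rfl
        rw [hstep, fT', ih]
  -- main argument via outer regularity and the tube lemma
  by_contra hcon
  push_neg at hcon
  set c := lam {y : Y | (x', y) ∈ N} with hc
  obtain ⟨U, hUsup, hUopen, hUlt⟩ :=
    Set.exists_isOpen_lt_of_lt {y : Y | (x, y) ∈ N} c hcon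
  -- the set of base points whose section lies in U is open
  set V : Set X := {z : X | {y : Y | (z, y) ∈ N} ⊆ U} with hV
  have hVopen : IsOpen V := by
    have hcomp : IsCompact (N ∩ (Set.univ ×ˢ Uᶜ)) :=
      (hNclosed.inter (isClosed_univ.prod hUopen.isClosed_compl)).isCompact
    have hcl : IsClosed (Prod.fst '' (N ∩ (Set.univ ×ˢ Uᶜ))) :=
      (hcomp.image continuous_fst).isClosed
    have hVeq : V = (Prod.fst '' (N ∩ (Set.univ ×ˢ Uᶜ)))ᶜ := by
      ext z
      simp only [hV, Set.mem_setOf_eq, Set.mem_compl_iff, Set.mem_image,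
        Set.mem_inter_iff, Set.mem_prod, Set.mem_univ, true_and,
        Set.mem_compl_iff, Prod.exists]
      constructor
      · rintro h ⟨a, b, ⟨hab, hbU⟩, rfl⟩
        exact hbU (h hab)
      · intro h y hy
        by_contra hyU
        exact h ⟨z, y, ⟨hy, hyU⟩, rfl⟩
    rw [hVeq]
    exact hcl.isOpen_compl
  have hxV : x ∈ V := hUsup
  -- density of the orbit of x'
  obtain ⟨z, hzorb, hzV⟩ := (hX x').exists_mem_open hVopen ⟨x, hxV⟩
  obtain ⟨n, rfl⟩ := hzorb
  have h1 : c ≤ lam U := by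
    rw [← horb n]
    exact measure_mono hzV
  exact absurd (lt_of_le_of_lt h1 hUlt) (lt_irrefl c)

/-- for a closed invariant N ⊆ X × Y and an S-invariant Borel
probability measure λ on Y, the measures of the sections N[x] agree. -/
theorem stmt14 {X Y : Type*} [MetricSpace X] [CompactSpace X]
    [MetricSpace Y] [CompactSpace Y] [MeasurableSpace Y] [BorelSpace Y]
    (T : X ≃ₜ X) (S : Y ≃ₜ Y)
    (hX : IsMinimalSystem T) (hY : IsMinimalSystem S)
    (lam : MeasureTheory.Measure Y) [MeasureTheory.IsProbabilityMeasure lam]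
    (hinv : ∀ A : Set Y, MeasurableSet A → lam (S ⁻¹' A) = lam A)
    (N : Set (X × Y)) (hNclosed : IsClosed N) (hNinv : (T.prodCongr S) '' N = N) :
    ∀ x x' : X, lam {y : Y | (x, y) ∈ N} = lam {y : Y | (x', y) ∈ N} := by
  intro x x'
  exact le_antisymm (stmt14_aux_le T S hX lam hinv N hNclosed hNinv x' x)
    (stmt14_aux_le T S hX lam hinv N hNclosed hNinv x x')
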